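/- Singleton bound in the rank metric: any code C ⊆ F_{q^m}^n with minimum rank distance d satisfies |C| ≤ q^{max{n,m}·(min{n,m} − d + 1)}. -/

import Mathlib

/-- The `F_q`-rank of a vector `a ∈ F_{q^m}^n` with respect to a fixed basis `β`. -/
noncomputable def rankq (Fq F : Type*) [Field Fq] [Field F] [Algebra Fq F]
    {m n : ℕ} (β : Module.Basis (Fin m) Fq F) (a : Fin n → F) : ℕ :=
  (Matrix.of fun (i : Fin m) (j : Fin n) => β.repr (a j) i).rank

/-- If all columns of index `< t` vanish, then the rank is at most `n - t`. -/
lemma rank_le_sub_of_zero_cols {K : Type*} [Field K] {m n : ℕ} (t : ℕ) (ht : t ≤ n)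
    (M : Matrix (Fin m) (Fin n) K) (h : ∀ i (j : Fin n), (j : ℕ) < t → M i j = 0) :
    M.rank ≤ n - t := by
  have hfac : M = (Matrix.of fun i (s : Fin (n - t)) => M i ⟨t + s, by omega⟩) *
      (Matrix.of fun (s : Fin (n - t)) (j : Fin n) =>
        if (j : ℕ) = t + s then (1 : K) else 0) := by
    ext i j
    rw [Matrix.mul_apply]
    by_cases hj : (j : ℕ) < t
    · rw [h i j hj]
      refine (Finset.sum_eq_zero ?_).symm
      intro s _
      have hne : (j : ℕ) ≠ t + (s : ℕ) := by omega
      simp [hne]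
    · push_neg at hj
      have hjt : (j : ℕ) - t < n - t := by omega
      rw [Finset.sum_eq_single (⟨(j : ℕ) - t, hjt⟩ : Fin (n - t))]
      · have hj' : (j : ℕ) = t + ((j : ℕ) - t) := by omega
        have hcol : (⟨t + ((j : ℕ) - t), by omega⟩ : Fin n) = j := by
          apply Fin.ext
          show t + ((j : ℕ) - t) = (j : ℕ)
          omega
        simp [hcol, ← hj']
      · intro s _ hs
        have hne : (j : ℕ) ≠ t + (s : ℕ) := by
          intro hc
          apply hs
          apply Fin.ext
          show (s : ℕ) = (j : ℕ) - t
          omega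
        simp [hne]
      · intro hs
        exact absurd (Finset.mem_univ _) hs
  have hstep := Matrix.rank_mul_le_left
      (Matrix.of fun i (s : Fin (n - t)) => M i ⟨t + s, by omega⟩)
      (Matrix.of fun (s : Fin (n - t)) (j : Fin n) =>
        if (j : ℕ) = t + s then (1 : K) else 0)
  rw [← hfac] at hstep
  calc M.rank ≤ _ := hstep
    _ ≤ Fintype.card (Fin (n - t)) := Matrix.rank_le_card_width _
    _ = n - t := Fintype.card_fin _

theorem singleton_bound_rank_metric (Fq F : Type*) [Field Fq] [Fintype Fq]
    [Field F] [Fintype F] [Algebra Fq F]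
    (m n : ℕ) (β : Module.Basis (Fin m) Fq F) (C : Set (Fin n → F)) (d : ℕ)
    (hmin : IsLeast {r : ℕ | ∃ a ∈ C, ∃ b ∈ C, a ≠ b ∧ rankq Fq F β (a - b) = r} d) :
    Nat.card C ≤ (Fintype.card Fq) ^ (max n m * (min n m - d + 1)) := by
  classical
  obtain ⟨⟨a₀, ha₀, b₀, hb₀, hab₀, hd₀⟩, hlb⟩ := hmin
  set q := Fintype.card Fq with hq
  set Mat : (Fin n → F) → Matrix (Fin m) (Fin n) Fq :=
    fun a => Matrix.of fun (i : Fin m) (j : Fin n) => β.repr (a j) i with hMat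
  have hrankq : ∀ a : Fin n → F, rankq Fq F β a = (Mat a).rank := fun _ => rfl
  -- `d ≥ 1`
  have hd1 : 1 ≤ d := by
    rcases Nat.eq_zero_or_pos d with h0 | h; swap; · exact h
    exfalso
    apply hab₀
    rw [h0] at hd₀
    have hbot : LinearMap.range (Mat (a₀ - b₀)).mulVecLin = ⊥ :=
      Submodule.finrank_eq_zero.mp hd₀
    have hml : (Mat (a₀ - b₀)).mulVecLin = 0 := LinearMap.range_eq_bot.mp hbot
    have hz : ∀ j, a₀ j = b₀ j := by
      intro j
      have h1 : Matrix.mulVec (Mat (a₀ - b₀)) (Pi.single j 1) = 0 := by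
        have := congrFun (congrArg DFunLike.coe hml) (Pi.single j 1)
        simpa [Matrix.mulVecLin_apply] using this
      have h2 : ∀ i, Mat (a₀ - b₀) i j = 0 := by
        intro i
        have := congrFun h1 i
        rw [Matrix.mulVec_single] at this
        simpa using this
      have h3 : β.repr ((a₀ - b₀) j) = 0 := by
        ext i; exact h2 i
      have h4 : (a₀ - b₀) j = 0 := β.repr.map_eq_zero_iff.mp h3
      have := sub_eq_zero.mp (by simpa using h4)
      exact this
    exact funext hz
  -- `d ≤ m` and `d ≤ n`
  have hdm : d ≤ m := by
    rw [← hd₀, hrankq]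
    exact (Matrix.rank_le_card_height _).trans (Fintype.card_fin m).le
  have hdn : d ≤ n := by
    rw [← hd₀, hrankq]
    exact (Matrix.rank_le_card_width _).trans (Fintype.card_fin n).le
  -- cardinality of F
  have hcardF : Fintype.card F = q ^ m := by
    rw [Module.card_fintype β, Fintype.card_fin, hq]
  rcases le_total n m with hnm | hmn
  · -- case n ≤ m : puncture the code on the first n - d + 1 coordinates
    have hmax : max n m = m := max_eq_right hnm
    have hminnm : min n m = n := min_eq_left hnm
    set t := n - d + 1 with htdef
    have ht : t ≤ n := by omega
    set f : C → (Fin t → F) := fun c j => c.1 (Fin.castLE ht j) with hf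
    have hinj : Function.Injective f := by
      intro x y hxy
      by_contra hne
      have hne' : x.1 ≠ y.1 := fun h => hne (Subtype.ext h)
      have hcols : ∀ i (j : Fin n), (j : ℕ) < t → Mat (x.1 - y.1) i j = 0 := by
        intro i j hj
        have : x.1 (Fin.castLE ht ⟨j, hj⟩) = y.1 (Fin.castLE ht ⟨j, hj⟩) :=
          congrFun hxy ⟨j, hj⟩
        have hxj : x.1 j = y.1 j := by
          convert this using 2 <;> exact Fin.ext rfl
        simp [hMat, hxj]
      have hle : (Mat (x.1 - y.1)).rank ≤ n - t :=
        rank_le_sub_of_zero_cols t ht _ hcols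
      have hmem : d ≤ rankq Fq F β (x.1 - y.1) :=
        hlb ⟨x.1, x.2, y.1, y.2, hne', rfl⟩
      rw [hrankq] at hmem
      omega
    calc Nat.card C ≤ Nat.card (Fin t → F) := Nat.card_le_card_of_injective f hinj
      _ = (q ^ m) ^ t := by
          rw [Nat.card_eq_fintype_card, Fintype.card_fun, hcardF, Fintype.card_fin]
      _ = q ^ (max n m * (min n m - d + 1)) := by
          rw [← pow_mul, hmax, hminnm]
  · -- case m ≤ n : keep only the first m - d + 1 rows of the matrices
    have hmax : max n m = n := max_eq_left hmn
    have hminnm : min n m = m := min_eq_right hmn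
    set t := m - d + 1 with htdef
    have ht : t ≤ m := by omega
    set f : C → (Fin t → Fin n → Fq) := fun c i j => β.repr (c.1 j) (Fin.castLE ht i) with hf
    have hinj : Function.Injective f := by
      intro x y hxy
      by_contra hne
      have hne' : x.1 ≠ y.1 := fun h => hne (Subtype.ext h)
      have hrows : ∀ i (j : Fin m), (j : ℕ) < t → (Mat (x.1 - y.1)).transpose i j = 0 := by
        intro j i hi
        have : β.repr (x.1 j) (Fin.castLE ht ⟨i, hi⟩)
            = β.repr (y.1 j) (Fin.castLE ht ⟨i, hi⟩) :=
          congrFun (congrFun hxy ⟨i, hi⟩) j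
        have hxj : β.repr (x.1 j) i = β.repr (y.1 j) i := by
          convert this using 2 <;> exact Fin.ext rfl
        simp [hMat, Matrix.transpose, hxj]
      have hle : ((Mat (x.1 - y.1)).transpose).rank ≤ m - t :=
        rank_le_sub_of_zero_cols t ht _ hrows
      rw [Matrix.rank_transpose] at hle
      have hmem : d ≤ rankq Fq F β (x.1 - y.1) :=
        hlb ⟨x.1, x.2, y.1, y.2, hne', rfl⟩
      rw [hrankq] at hmem
      omega
    calc Nat.card C ≤ Nat.card (Fin t → Fin n → Fq) :=
        Nat.card_le_card_of_injective f hinj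
      _ = (q ^ n) ^ t := by
          rw [Nat.card_eq_fintype_card, Fintype.card_fun, Fintype.card_fun,
            Fintype.card_fin, Fintype.card_fin]
      _ = q ^ (max n m * (min n m - d + 1)) := by
          rw [← pow_mul, hmax, hminnm]
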